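/- arXiv:1008.1675 — 5 statements merged into one kernel-verified Lean document; each statement's English description precedes it below -/
import Mathlib

section
/- Let t > 0, a ≥ 0 be reals, and L₁, L₂ ≥ 0 with L₁² ≤ a, L₂² ≤ a. Suppose I ∈ ℂ satisfies |I| ≤ L₁L₂ and (t+a)(L₁² + L₂² - 2 Re I) + |I|² - L₁²L₂² = 0. Then L₁ = L₂, I is real nonnegative, and |I| = L₁L₂ (hence I = L₁² = L₂²). -/
/-- Key algebraic lemma: if `(t+a)(L₁²+L₂²-2 Re I) + |I|² - L₁²L₂² = 0` with
`t > 0`, `L₁² ≤ a`, `L₂² ≤ a`, `|I| ≤ L₁L₂`, then `L₁ = L₂`, `I` is a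
nonnegative real, and `|I| = L₁L₂` (hence `I = L₁² = L₂²`). -/
theorem stmt_3 (t a L₁ L₂ : ℝ) (ht : 0 < t) (ha : 0 ≤ a)
    (hL₁ : 0 ≤ L₁) (hL₂ : 0 ≤ L₂) (hL₁a : L₁ ^ 2 ≤ a) (hL₂a : L₂ ^ 2 ≤ a)
    (I : ℂ) (hI : ‖I‖ ≤ L₁ * L₂)
    (heq : (t + a) * (L₁ ^ 2 + L₂ ^ 2 - 2 * I.re) + ‖I‖ ^ 2
        - L₁ ^ 2 * L₂ ^ 2 = 0) :
    L₁ = L₂ ∧ I.im = 0 ∧ 0 ≤ I.re ∧ ‖I‖ = L₁ * L₂ ∧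
      I = (L₁ ^ 2 : ℂ) ∧ I = (L₂ ^ 2 : ℂ) := by
  have hre : I.re ≤ ‖I‖ := Complex.re_le_norm I
  have habs0 : 0 ≤ ‖I‖ := norm_nonneg I
  have hLLa : L₁ * L₂ ≤ a := by nlinarith [sq_nonneg (L₁ - L₂)]
  -- first: |I| = L₁ L₂
  have habs : ‖I‖ = L₁ * L₂ := by
    by_contra h
    have hlt : ‖I‖ < L₁ * L₂ := lt_of_le_of_ne hI h
    nlinarith [sq_nonneg (L₁ - L₂), mul_pos ht (sub_pos.mpr hlt)]
  -- then the cross term vanishes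
  have hX : L₁ ^ 2 + L₂ ^ 2 - 2 * I.re = 0 := by
    have hta : 0 < t + a := by linarith
    have : (t + a) * (L₁ ^ 2 + L₂ ^ 2 - 2 * I.re) = 0 := by nlinarith
    exact (mul_eq_zero.mp this).resolve_left (ne_of_gt hta)
  have hreLL : I.re = L₁ * L₂ := by nlinarith [sq_nonneg (L₁ - L₂)]
  have hL : L₁ = L₂ := by nlinarith [sq_nonneg (L₁ - L₂)]
  have him : I.im = 0 := by
    have hsq : ‖I‖ ^ 2 = I.re ^ 2 + I.im ^ 2 := by
      rw [Complex.sq_norm, Complex.normSq_apply]; ring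
    have : I.im ^ 2 = 0 := by nlinarith
    exact pow_eq_zero_iff (n := 2) (by norm_num) |>.mp this
  have hre' : I.re = L₁ ^ 2 := by rw [hreLL, hL]; ring
  refine ⟨hL, him, by rw [hreLL]; positivity, habs, ?_, ?_⟩
  · apply Complex.ext <;> simp [him, hre', ← Complex.ofReal_pow]
  · apply Complex.ext <;> simp [him, hre', hL, ← Complex.ofReal_pow]
end

section
/- Let β₁,...,β_N ∈ ℂ and β'₁,...,β'_N ∈ ℂ with Σ|β_j|² ≤ a and Σ|β'_j|² ≤ a for some a ≥ 0, and let t > 0. If |t + a - Σ β_j conj(β'_j)|² = (t + a - Σ|β_j|²)(t + a - Σ|β'_j|²), then β_j = β'_j for all j. -/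
/-- If `Σ|β_j|² ≤ a`, `Σ|β'_j|² ≤ a`, `t > 0`, and
`|t + a - Σ β_j conj(β'_j)|² = (t + a - Σ|β_j|²)(t + a - Σ|β'_j|²)`,
then `β_j = β'_j` for all `j`. -/
theorem stmt_5 (N : ℕ) (β β' : Fin N → ℂ) (a t : ℝ) (ha : 0 ≤ a) (ht : 0 < t)
    (hβ : ∑ j, ‖β j‖ ^ 2 ≤ a)
    (hβ' : ∑ j, ‖β' j‖ ^ 2 ≤ a)
    (heq : ‖(t : ℂ) + a - ∑ j, β j * (starRingEnd ℂ) (β' j)‖ ^ 2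
      = (t + a - ∑ j, ‖β j‖ ^ 2)
        * (t + a - ∑ j, ‖β' j‖ ^ 2)) :
    ∀ j, β j = β' j := by
  set A := ∑ j, ‖β j‖ ^ 2 with hA
  set B := ∑ j, ‖β' j‖ ^ 2 with hB
  set S := ∑ j, β j * (starRingEnd ℂ) (β' j) with hS
  have hsum : ∑ j, ‖β j - β' j‖ ^ 2 = A + B - 2 * S.re := by
    have hSre : S.re = ∑ j, (β j * (starRingEnd ℂ) (β' j)).re := by
      rw [hS, Complex.re_sum]
    have key : ∀ j, ‖β j - β' j‖ ^ 2
        = ‖β j‖^2 + ‖β' j‖^2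
          - 2*(β j * (starRingEnd ℂ) (β' j)).re := fun j => by
      rw [Complex.sq_norm, Complex.sq_norm, Complex.sq_norm, Complex.normSq_sub]
    simp only [key, Finset.sum_sub_distrib, Finset.sum_add_distrib, ← Finset.mul_sum,
      ← hSre, hA, hB]
  have hnonneg : (0:ℝ) ≤ ∑ j, ‖β j - β' j‖ ^ 2 :=
    Finset.sum_nonneg fun j _ => sq_nonneg _
  -- expand |c - S|²
  have habs : ‖(t : ℂ) + a - S‖ ^ 2
      = (t + a - S.re)^2 + S.im^2 := by
    rw [Complex.sq_norm, Complex.normSq_apply]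
    simp [Complex.sub_re, Complex.add_re, Complex.sub_im, Complex.add_im]
    ring
  rw [habs] at heq
  have hre_le : S.re ≤ (A + B) / 2 := by linarith [hnonneg, hsum.symm, hsum ▸ hnonneg]
  have hre_ge : (A + B) / 2 ≤ S.re := by
    nlinarith [sq_nonneg (S.im), sq_nonneg (A - B), sq_nonneg (t + a - S.re - (t + a - (A+B)/2))]
  have hzero : ∑ j, ‖β j - β' j‖ ^ 2 = 0 := by linarith
  have := (Finset.sum_eq_zero_iff_of_nonneg (fun j _ => sq_nonneg (‖β j - β' j‖))).mp hzero
  intro j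
  have hj := this j (Finset.mem_univ j)
  have : ‖β j - β' j‖ = 0 := by
    have := sq_eq_zero_iff.mp hj
    exact this
  have := norm_eq_zero.mp this
  exact sub_eq_zero.mp this
end

section
/- Let φ(z) = (Az+B)/(⟨z,C⟩+d) be a linear fractional map of ℂ^N mapping B_N into B_N, and σ(z) = (A*z - C)/(⟨z,-B⟩ + conj(d)) its adjoint map. If φ(ζ) = η for ζ, η ∈ ∂B_N, then σ(η) = ζ. -/
open Metric

set_option maxHeartbeats 1000000

/-- If `φ(z) = (Az+B)/(⟨z,C⟩+d)` maps `B_N` into `B_N` and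
`σ(z) = (A*z-C)/(⟨z,-B⟩+conj d)` is its adjoint map, then `φ(ζ) = η` for
`ζ, η ∈ ∂B_N` implies `σ(η) = ζ`. -/
theorem stmt_11 (n : ℕ) (A : Matrix (Fin (n + 1)) (Fin (n + 1)) ℂ)
    (B C : Fin (n + 1) → ℂ) (d : ℂ)
    (φ σ : EuclideanSpace ℂ (Fin (n + 1)) → EuclideanSpace ℂ (Fin (n + 1)))
    (hφ : ∀ z : EuclideanSpace ℂ (Fin (n + 1)), ∀ j,
      φ z j = ((∑ k, A j k * z k) + B j) / ((∑ k, z k * (starRingEnd ℂ) (C k)) + d))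
    (hσ : ∀ z : EuclideanSpace ℂ (Fin (n + 1)), ∀ j,
      σ z j = ((∑ k, (starRingEnd ℂ) (A k j) * z k) - C j)
        / ((∑ k, z k * (starRingEnd ℂ) (-B k)) + (starRingEnd ℂ) d))
    (hmaps : Set.MapsTo φ (ball (0 : EuclideanSpace ℂ (Fin (n + 1))) 1)
      (ball (0 : EuclideanSpace ℂ (Fin (n + 1))) 1))
    (ζ η : EuclideanSpace ℂ (Fin (n + 1)))
    (hζ : ζ ∈ sphere (0 : EuclideanSpace ℂ (Fin (n + 1))) 1)
    (hη : η ∈ sphere (0 : EuclideanSpace ℂ (Fin (n + 1))) 1)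
    (hφζ : φ ζ = η) :
    σ η = ζ := by
  rw [mem_sphere_zero_iff_norm] at hζ hη
  set Dz : EuclideanSpace ℂ (Fin (n + 1)) → ℂ :=
    fun z => (∑ k, z k * (starRingEnd ℂ) (C k)) + d with hDzdef
  set Nm : Fin (n + 1) → EuclideanSpace ℂ (Fin (n + 1)) → ℂ :=
    fun j z => (∑ k, A j k * z k) + B j with hNmdef
  set S : EuclideanSpace ℂ (Fin (n + 1)) → ℂ :=
    fun z => ∑ j, Nm j z * (starRingEnd ℂ) (η j) with hSdef
  set e : ℂ := (∑ k, η k * (starRingEnd ℂ) (-B k)) + (starRingEnd ℂ) d with hedef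
  set M : Fin (n + 1) → ℂ :=
    fun j => (∑ k, (starRingEnd ℂ) (A k j) * η k) - C j with hMdef
  -- the fundamental algebraic identity
  have Fid : ∀ z : EuclideanSpace ℂ (Fin (n + 1)),
      Dz z - S z = (starRingEnd ℂ) e - ∑ k, z k * (starRingEnd ℂ) (M k) := by
    intro z
    show ((∑ k, z k * (starRingEnd ℂ) (C k)) + d)
        - (∑ j, ((∑ k, A j k * z k) + B j) * (starRingEnd ℂ) (η j))
      = (starRingEnd ℂ) ((∑ k, η k * (starRingEnd ℂ) (-B k)) + (starRingEnd ℂ) d)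
        - ∑ k, z k * (starRingEnd ℂ) ((∑ j, (starRingEnd ℂ) (A j k) * η j) - C k)
    simp only [map_add, map_sum, map_mul, map_neg, map_sub, Complex.conj_conj]
    simp only [add_mul, sub_mul, mul_sub, Finset.sum_add_distrib, Finset.sum_sub_distrib,
      Finset.sum_mul, Finset.mul_sum]
    rw [Finset.sum_comm (γ := Fin (n+1))]
    ring_nf
    rw [Finset.sum_congr rfl (fun y _ => Finset.sum_congr rfl
      (fun x _ => by ring : ∀ x ∈ Finset.univ, A x y * z y * (starRingEnd ℂ) (η x)
        = z y * A x y * (starRingEnd ℂ) (η x)))]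
    rw [show (∑ x, -((starRingEnd ℂ) (η x) * B x)) = -∑ x, B x * (starRingEnd ℂ) (η x) by
      rw [← Finset.sum_neg_distrib]; exact Finset.sum_congr rfl fun x _ => by ring]
    ring
  -- denominator at ζ is nonzero
  have hDζ : Dz ζ ≠ 0 := by
    intro h
    have h0 : η = 0 := by
      ext j
      have h1 := hφ ζ j
      rw [hφζ] at h1
      have hd0 : (∑ k, ζ k * (starRingEnd ℂ) (C k)) + d = 0 := h
      rw [h1, hd0, div_zero]
      rfl
    rw [h0, norm_zero] at hη
    exact one_ne_zero hη.symm
  -- F ζ = 0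
  have hFζ : Dz ζ - S ζ = 0 := by
    have hNζ : ∀ j, Nm j ζ = η j * Dz ζ := by
      intro j
      have h1 := hφ ζ j
      rw [hφζ] at h1
      have := (div_eq_iff hDζ).mp h1.symm
      exact this.symm ▸ this
    have hη1 : (∑ j, η j * (starRingEnd ℂ) (η j)) = 1 := by
      have h2 := inner_self_eq_norm_sq_to_K (𝕜 := ℂ) η
      rw [PiLp.inner_apply] at h2
      simp only [RCLike.inner_apply] at h2
      rw [hη] at h2
      simpa [mul_comm] using h2
    have hSζ : S ζ = Dz ζ := by
      show (∑ j, Nm j ζ * (starRingEnd ℂ) (η j)) = Dz ζ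
      calc (∑ j, Nm j ζ * (starRingEnd ℂ) (η j))
          = ∑ j, (η j * (starRingEnd ℂ) (η j)) * Dz ζ := by
            exact Finset.sum_congr rfl fun j _ => by rw [hNζ j]; ring
        _ = (∑ j, η j * (starRingEnd ℂ) (η j)) * Dz ζ := by rw [Finset.sum_mul]
        _ = Dz ζ := by rw [hη1, one_mul]
    rw [hSζ, sub_self]
  -- positivity of the quadratic form on the ball
  have hQpos : ∀ z : EuclideanSpace ℂ (Fin (n + 1)), ‖z‖ < 1 → Dz z ≠ 0 →
      0 < ((Dz z - S z) * (starRingEnd ℂ) (Dz z)).re := by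
    intro z hz hD
    have hφn : ‖φ z‖ < 1 := mem_ball_zero_iff.mp (hmaps (mem_ball_zero_iff.mpr hz))
    set h : ℂ := (inner ℂ η (φ z) : ℂ) with hhdef
    have habs : ‖h‖ < 1 := by
      have h3 := norm_inner_le_norm (𝕜 := ℂ) η (φ z)
      rw [hη, one_mul] at h3
      exact lt_of_le_of_lt h3 hφn
    have hS : S z = h * Dz z := by
      rw [hhdef, PiLp.inner_apply]
      simp only [RCLike.inner_apply]
      show (∑ j, Nm j z * (starRingEnd ℂ) (η j)) = _
      rw [Finset.sum_mul]
      refine Finset.sum_congr rfl fun j _ => ?_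
      rw [hφ z j]
      show Nm j z * (starRingEnd ℂ) (η j)
        = (Nm j z / Dz z) * (starRingEnd ℂ) (η j) * Dz z
      rw [mul_right_comm, div_mul_cancel₀ _ hD]
    have key : (Dz z - S z) * (starRingEnd ℂ) (Dz z)
        = (1 - h) * (Complex.normSq (Dz z) : ℂ) := by
      rw [hS, ← Complex.mul_conj]; ring
    rw [key]
    have : ((1 - h) * (Complex.normSq (Dz z) : ℂ)).re
        = (1 - h.re) * Complex.normSq (Dz z) := by
      simp [Complex.mul_re]
    rw [this]
    have h4 : h.re < 1 := lt_of_le_of_lt (Complex.re_le_norm h) habs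
    exact mul_pos (by linarith) (Complex.normSq_pos.mpr hD)
  have hQnn : ∀ z : EuclideanSpace ℂ (Fin (n + 1)), ‖z‖ < 1 →
      0 ≤ ((Dz z - S z) * (starRingEnd ℂ) (Dz z)).re := by
    intro z hz
    by_cases hD : Dz z = 0
    · simp [hD]
    · exact le_of_lt (hQpos z hz hD)
  by_cases he : e = 0
  · -- degenerate case: impossible
    exfalso
    have hζM : (∑ k, ζ k * (starRingEnd ℂ) (M k)) = 0 := by
      have h2 := (Fid ζ).symm.trans hFζ
      rw [he, map_zero, zero_sub, neg_eq_zero] at h2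
      exact h2
    set cz : ℂ := ∑ k, ζ k * (starRingEnd ℂ) (C k) with hczdef
    have hDζ' : Dz ζ = cz + d := rfl
    have hex : ∃ t : ℝ, 0 < t ∧ t < 1 ∧ (t:ℂ) * cz + d ≠ 0 := by
      by_cases h1 : ((1/2 : ℝ):ℂ) * cz + d = 0
      · refine ⟨1/3, by norm_num, by norm_num, fun h2 => hDζ ?_⟩
        push_cast at h1 h2
        have hcz : cz = 0 := by linear_combination (6:ℂ) * h1 - (6:ℂ) * h2
        have hd0 : d = 0 := by rw [hcz, mul_zero, zero_add] at h1; exact h1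
        rw [hDζ', hcz, hd0, add_zero]
      · exact ⟨1/2, by norm_num, by norm_num, h1⟩
    obtain ⟨t, ht0, ht1, htD⟩ := hex
    set zt : EuclideanSpace ℂ (Fin (n + 1)) := ((t:ℂ)) • ζ with hztdef
    have hztk : ∀ k, zt k = (t:ℂ) * ζ k := fun k => rfl
    have hztnorm : ‖zt‖ < 1 := by
      rw [hztdef, norm_smul, hζ, mul_one]
      simpa [abs_of_pos ht0] using ht1
    have hDzt : Dz zt = (t:ℂ) * cz + d := by
      show (∑ k, zt k * (starRingEnd ℂ) (C k)) + d = _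
      simp only [hztk]
      rw [hczdef, Finset.mul_sum]
      congr 1
      exact Finset.sum_congr rfl fun k _ => by ring
    have hFzt : Dz zt - S zt = 0 := by
      rw [Fid zt, he, map_zero, zero_sub, neg_eq_zero]
      calc (∑ k, zt k * (starRingEnd ℂ) (M k))
          = (t:ℂ) * ∑ k, ζ k * (starRingEnd ℂ) (M k) := by
            rw [Finset.mul_sum]
            exact Finset.sum_congr rfl fun k _ => by rw [hztk]; ring
        _ = 0 := by rw [hζM, mul_zero]
    have hp := hQpos zt hztnorm (by rw [hDzt]; exact htD)
    rw [hFzt, zero_mul] at hp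
    simp at hp
  · -- main case
    have hce : (starRingEnd ℂ) e ≠ 0 := fun h => he (by simpa using congrArg (starRingEnd ℂ) h)
    have hxj : ∀ j, σ η j = M j / e := fun j => hσ η j
    have hMx : ∀ k, M k = e * σ η k := by
      intro k; rw [hxj k, mul_div_cancel₀ _ he]
    have hFx : ∀ z : EuclideanSpace ℂ (Fin (n + 1)),
        Dz z - S z = (starRingEnd ℂ) e * (1 - (inner ℂ (σ η) z : ℂ)) := by
      intro z
      rw [Fid z, PiLp.inner_apply]
      simp only [RCLike.inner_apply]
      rw [mul_sub, mul_one, Finset.mul_sum]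
      congr 1
      refine Finset.sum_congr rfl fun k _ => ?_
      rw [hMx k, map_mul]
      ring
    have hip : (inner ℂ (σ η) ζ : ℂ) = 1 := by
      have h2 := (hFx ζ).symm.trans hFζ
      rcases mul_eq_zero.mp h2 with h3 | h3
      · exact absurd h3 hce
      · exact (sub_eq_zero.mp h3).symm
    by_contra hne
    have hvne : σ η - ζ ≠ 0 := sub_ne_zero.mpr hne
    set v : EuclideanSpace ℂ (Fin (n + 1)) := σ η - ζ with hvdef
    have hm : 0 < ‖v‖ := norm_pos_iff.mpr hvne
    set m : ℝ := ‖v‖ with hmdef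
    have hζζ : (inner ℂ ζ ζ : ℂ) = 1 := by
      rw [inner_self_eq_norm_sq_to_K, hζ]; norm_num
    have hζx : (inner ℂ ζ (σ η) : ℂ) = 1 := by
      rw [← inner_conj_symm, hip, map_one]
    have hζv : (inner ℂ ζ v : ℂ) = 0 := by
      rw [hvdef, inner_sub_right, hζx, hζζ, sub_self]
    have hxv : (inner ℂ (σ η) v : ℂ) = (m:ℂ)^2 := by
      have h5 : σ η = ζ + v := by rw [hvdef]; abel
      calc (inner ℂ (σ η) v : ℂ) = (inner ℂ (ζ + v) v : ℂ) := by rw [← h5]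
        _ = (inner ℂ ζ v : ℂ) + (inner ℂ v v : ℂ) := inner_add_left ζ v v
        _ = (m:ℂ)^2 := by
            rw [hζv, zero_add]; exact inner_self_eq_norm_sq_to_K v
    set vh : EuclideanSpace ℂ (Fin (n + 1)) := ((m:ℂ))⁻¹ • v with hvhdef
    have hvhnorm : ‖vh‖ = 1 := by
      rw [hvhdef, norm_smul, norm_inv]
      simp only [Complex.norm_real, Real.norm_eq_abs]
      rw [abs_of_pos hm, ← hmdef, inv_mul_cancel₀ hm.ne']
    have hζvh : (inner ℂ ζ vh : ℂ) = 0 := by rw [hvhdef, inner_smul_right, hζv, mul_zero]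
    have hxvh : (inner ℂ (σ η) vh : ℂ) = (m:ℂ) := by
      rw [hvhdef, inner_smul_right, hxv]
      have : (m:ℂ) ≠ 0 := by exact_mod_cast hm.ne'
      field_simp
    set cz : ℂ := ∑ k, ζ k * (starRingEnd ℂ) (C k) with hczdef
    set c2 : ℂ := ∑ k, vh k * (starRingEnd ℂ) (C k) with hc2def
    have hDζ' : Dz ζ = cz + d := rfl
    set w : ℂ := (starRingEnd ℂ) e * (starRingEnd ℂ) (Dz ζ) with hwdef
    have hw : w ≠ 0 :=
      mul_ne_zero hce (fun h => hDζ (by simpa using congrArg (starRingEnd ℂ) h))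
    have habsw : 0 < ‖w‖ := norm_pos_iff.mpr hw
    set u : ℂ := (starRingEnd ℂ) w / ((‖w‖ : ℝ) : ℂ) with hudef
    have hu1 : ‖u‖ = 1 := by
      rw [hudef, norm_div, Complex.norm_conj, Complex.norm_real, Real.norm_eq_abs, abs_of_pos habsw,
        div_self habsw.ne']
    have huw : u * w = ((‖w‖ : ℝ) : ℂ) := by
      rw [hudef, div_mul_eq_mul_div, mul_comm ((starRingEnd ℂ) w) w, Complex.mul_conj,
        ← Complex.sq_norm]
      push_cast
      rw [sq, mul_div_assoc, div_self (Complex.ofReal_ne_zero.mpr habsw.ne'), mul_one]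
    have hzsk : ∀ (s : ℝ) (k : Fin (n + 1)),
        (((1 - s^2 : ℝ):ℂ) • ζ + ((s:ℂ)*u) • vh) k
        = ((1 - s^2 : ℝ):ℂ) * ζ k + ((s:ℂ)*u) * vh k := fun s k => by
      simp [PiLp.add_apply, PiLp.smul_apply, smul_eq_mul]
    have hzsnorm : ∀ s : ℝ, 0 < s → s < 1 →
        ‖((1 - s^2 : ℝ):ℂ) • ζ + ((s:ℂ)*u) • vh‖ < 1 := by
      intro s hs0 hs1
      have horth : (inner ℂ (((1 - s^2 : ℝ):ℂ) • ζ) (((s:ℂ)*u) • vh) : ℂ) = 0 := by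
        rw [inner_smul_left, inner_smul_right, hζvh]; ring
      have hsq := norm_add_sq_eq_norm_sq_add_norm_sq_of_inner_eq_zero _ _ horth
      have hn1 : ‖((1 - s^2 : ℝ):ℂ) • ζ‖ = 1 - s^2 := by
        rw [norm_smul, hζ, mul_one]
        simp only [Complex.norm_real, Real.norm_eq_abs]
        nlinarith [abs_of_nonneg (by nlinarith : (0:ℝ) ≤ 1 - s^2)]
      have hn2 : ‖((s:ℂ)*u) • vh‖ = s := by
        rw [norm_smul, hvhnorm, mul_one, norm_mul]
        simp only [Complex.norm_real, Real.norm_eq_abs, hu1, mul_one]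
        exact abs_of_pos hs0
      rw [hn1, hn2] at hsq
      have h1s : 0 < (1:ℝ) - s^2 := by
        nlinarith [mul_pos (sub_pos.mpr hs1) (by linarith : (0:ℝ) < 1 + s)]
      have hpos : 0 < s^2 * (1 - s^2) := mul_pos (pow_pos hs0 2) h1s
      nlinarith [norm_nonneg (((1 - s^2 : ℝ):ℂ) • ζ + ((s:ℂ)*u) • vh), hsq, hpos]
    have hDzs : ∀ s : ℝ, Dz (((1 - s^2 : ℝ):ℂ) • ζ + ((s:ℂ)*u) • vh)
        = ((1 - s^2 : ℝ):ℂ) * cz + (s:ℂ)*u*c2 + d := by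
      intro s
      show (∑ k, (((1 - s^2 : ℝ):ℂ) • ζ + ((s:ℂ)*u) • vh) k * (starRingEnd ℂ) (C k)) + d = _
      simp only [hzsk]
      congr 1
      rw [hczdef, hc2def, Finset.mul_sum, Finset.mul_sum, ← Finset.sum_add_distrib]
      refine Finset.sum_congr rfl fun k _ => ?_
      ring
    have hips : ∀ s : ℝ, (inner ℂ (σ η) (((1 - s^2 : ℝ):ℂ) • ζ + ((s:ℂ)*u) • vh) : ℂ)
        = ((1 - s^2 : ℝ):ℂ) + (s:ℂ)*u*(m:ℂ) := by
      intro s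
      rw [inner_add_right, inner_smul_right, inner_smul_right, hip, hxvh, mul_one, mul_assoc]
    set q : ℝ → ℝ := fun s => ((starRingEnd ℂ) e * ((s:ℂ) - u*(m:ℂ))
        * (starRingEnd ℂ) (((1 - s^2 : ℝ):ℂ) * cz + (s:ℂ)*u*c2 + d)).re with hqdef
    have hqcont : Continuous q := by
      rw [hqdef]
      fun_prop
    have hq0 : q 0 = -(m * ‖w‖) := by
      simp only [hqdef]
      have h6 : ((1 - (0:ℝ)^2 : ℝ):ℂ) * cz + ((0:ℝ):ℂ)*u*c2 + d = Dz ζ := by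
        rw [hDζ']; push_cast; ring
      rw [h6]
      have h7 : (starRingEnd ℂ) e * (((0:ℝ):ℂ) - u*(m:ℂ)) * (starRingEnd ℂ) (Dz ζ)
          = -((m:ℂ) * ((‖w‖ : ℝ):ℂ)) := by
        push_cast
        linear_combination (m:ℂ)*u*hwdef - (m:ℂ)*huw
      rw [h7]
      simp [Complex.ofReal_mul]
    have hqs : ∀ s : ℝ, 0 < s → s < 1 → 0 ≤ q s := by
      intro s hs0 hs1
      have h1 := hQnn _ (hzsnorm s hs0 hs1)
      have h2 : Dz (((1 - s^2 : ℝ):ℂ) • ζ + ((s:ℂ)*u) • vh)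
          - S (((1 - s^2 : ℝ):ℂ) • ζ + ((s:ℂ)*u) • vh)
          = (s:ℂ) * ((starRingEnd ℂ) e * ((s:ℂ) - u*(m:ℂ))) := by
        rw [hFx, hips]; push_cast; ring
      rw [h2, hDzs] at h1
      have h3 : ((s:ℂ) * ((starRingEnd ℂ) e * ((s:ℂ) - u*(m:ℂ)))
          * (starRingEnd ℂ) (((1 - s^2 : ℝ):ℂ) * cz + (s:ℂ)*u*c2 + d)).re = s * q s := by
        rw [hqdef, mul_assoc]
        simp [Complex.mul_re, Complex.ofReal_re, Complex.ofReal_im, mul_assoc]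
      rw [h3] at h1
      exact nonneg_of_mul_nonneg_right h1 hs0
    have hq0neg : q 0 < 0 := by
      rw [hq0]
      exact neg_lt_zero.mpr (mul_pos hm habsw)
    have hev : ∀ᶠ s in nhds (0:ℝ), q s < 0 :=
      hqcont.continuousAt.eventually_lt continuousAt_const hq0neg
    obtain ⟨δ, hδ, hδ'⟩ := Metric.eventually_nhds_iff.mp hev
    have hs0 : (0:ℝ) < min (δ/2) (1/2) := lt_min (by linarith) (by norm_num)
    have hs1 : min (δ/2) (1/2) < 1 := lt_of_le_of_lt (min_le_right _ _) (by norm_num)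
    have hlt : q (min (δ/2) (1/2)) < 0 := by
      apply hδ'
      rw [Real.dist_eq, sub_zero, abs_of_pos hs0]
      exact lt_of_le_of_lt (min_le_left _ _) (by linarith)
    exact absurd (hqs _ hs0 hs1) (not_le.mpr hlt)
end

section
/- Let φ be holomorphic near e₁ in ℂ^N with values determined by a linear fractional map with normalized matrix T having first row (t+K, γ₂,...,γ_N, 1-t-K) and last row (K, γ₂,...,γ_N, 1-K). Then the first component satisfies the expansion φ₁(z₁, 0') = 1 + t(z₁-1) - tK(z₁-1)² + o(|z₁-1|²) as (z₁,0') → e₁. -/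
/-- Second-order expansion of the first component of a normalized linear
fractional map along the slice `z = (z₁, 0')`:
`φ₁(z₁,0') = ((t+K)z₁ + 1 - t - K)/(Kz₁ + 1 - K)
           = 1 + t(z₁-1) - tK(z₁-1)² + o(|z₁-1|²)` as `z₁ → 1`. -/
theorem stmt_13 (t : ℝ) (ht : 0 < t) (K : ℂ)
    (f : ℂ → ℂ)
    (hf : f = fun z₁ => ((↑t + K) * z₁ + 1 - ↑t - K) / (K * z₁ + 1 - K)) :
    (fun z₁ : ℂ => f z₁ - (1 + ↑t * (z₁ - 1) - ↑t * K * (z₁ - 1) ^ 2))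
      =o[nhds (1 : ℂ)] fun z₁ : ℂ => ‖z₁ - 1‖ ^ 2 := by
  have hDcont : ContinuousAt (fun z : ℂ => K * z + 1 - K) 1 := by fun_prop
  have hD1 : (fun z : ℂ => K * z + 1 - K) 1 = 1 := by ring
  have hDne : ∀ᶠ z : ℂ in nhds 1, K * z + 1 - K ≠ 0 := by
    have : ∀ᶠ w : ℂ in nhds ((fun z : ℂ => K * z + 1 - K) 1), w ≠ 0 := by
      rw [hD1]; exact eventually_ne_nhds one_ne_zero
    exact hDcont.eventually this
  have hg : (fun z : ℂ => (↑t : ℂ) * K ^ 2 * (z - 1) ^ 3 / (K * z + 1 - K))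
      =o[nhds (1 : ℂ)] fun z₁ : ℂ => ‖z₁ - 1‖ ^ 2 := by
    rw [Asymptotics.isLittleO_iff]
    intro ε hε
    have hcont : ContinuousAt (fun z : ℂ => (↑t : ℂ) * K ^ 2 * (z - 1) / (K * z + 1 - K)) 1 := by
      apply ContinuousAt.div (by fun_prop) hDcont
      show K * 1 + 1 - K ≠ 0; simp
    have hsmall : ∀ᶠ z : ℂ in nhds 1,
        ‖(↑t : ℂ) * K ^ 2 * (z - 1) / (K * z + 1 - K)‖ ≤ ε := by
      have := hcont.tendsto
      have h0 : (↑t : ℂ) * K ^ 2 * (1 - 1) / (K * 1 + 1 - K) = 0 := by simp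
      rw [h0] at this
      have := this.norm
      simp only [norm_zero] at this
      exact this.eventually_le_const hε
    filter_upwards [hsmall] with z hz
    have hrw : (↑t : ℂ) * K ^ 2 * (z - 1) ^ 3 / (K * z + 1 - K)
        = ((↑t : ℂ) * K ^ 2 * (z - 1) / (K * z + 1 - K)) * (z - 1) ^ 2 := by
      ring
    rw [hrw, norm_mul]
    have h2 : ‖(z - 1) ^ 2‖ = ‖‖z - 1‖ ^ 2‖ := by
      simp [Real.norm_eq_abs, abs_of_nonneg]
    rw [h2]
    exact mul_le_mul_of_nonneg_right hz (norm_nonneg _)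
  apply hg.congr'
  · filter_upwards [hDne] with z hz
    subst hf
    simp only
    field_simp
    ring
  · rfl
end

section
/- Let t ∈ (0,∞), and suppose (α_{jk})_{j=2}^N and (α'_{jk})_{j=2}^N are complex vectors with Σ_j|α_{jk}|² ≤ t and Σ_j|α'_{jk}|² ≤ t. If (2t - Σ_j|α_{jk}|²)(2t - Σ_j|α'_{jk}|²) = |2t - Σ_j α_{jk} conj(α'_{jk})|², then α_{jk} = α'_{jk} for all j. -/
/-- Pure real-arithmetic equality case. -/
lemma stmt_19_aux (t A B r i a : ℝ) (ht : 0 < t) (hA0 : 0 ≤ A) (hB0 : 0 ≤ B)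
    (hA : A ≤ t) (hB : B ≤ t) (ha0 : 0 ≤ a) (hra : r ≤ a)
    (hCS : a ^ 2 ≤ A * B) (ha2 : a ^ 2 = r ^ 2 + i ^ 2)
    (heq : (2 * t - A) * (2 * t - B) = (2 * t - r) ^ 2 + i ^ 2) :
    r = A ∧ i = 0 ∧ A = B := by
  have ham : a ≤ (A + B) / 2 := by
    nlinarith [sq_nonneg (A - B), sq_nonneg (a - (A + B) / 2), sq_nonneg (a + (A + B) / 2)]
  have hAB : A = B := by
    have h : (A - B) ^ 2 ≤ 0 := by
      nlinarith [mul_nonneg ht.le (sub_nonneg.2 hra),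
        mul_nonneg (sub_nonneg.2 ham)
          (show (0:ℝ) ≤ 4 * t - (A + B) / 2 - a by linarith)]
    nlinarith [sq_nonneg (A - B)]
  have haA : a ≤ A := by rw [hAB]; linarith [ham, hAB]
  have hAr : A ≤ r := by
    nlinarith [mul_nonneg (sub_nonneg.2 haA)
        (show (0:ℝ) ≤ 2 * t - A - a by linarith),
      mul_nonneg ht.le (sub_nonneg.2 hra), ha2, heq, hAB]
  have hrA : r = A := le_antisymm (hra.trans haA) hAr
  have haA' : a = A := le_antisymm haA (hrA ▸ hra)
  have hi : i = 0 := by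
    have h2 : i ^ 2 = 0 := by rw [haA', hrA] at ha2; linarith
    exact pow_eq_zero_iff two_ne_zero |>.mp h2
  exact ⟨hrA, hi, hAB⟩

/-- Equality-case lemma: if `Σ_j|α_j|² ≤ t`, `Σ_j|α'_j|² ≤ t` with `t > 0` and
`(2t - Σ|α_j|²)(2t - Σ|α'_j|²) = |2t - Σ α_j conj(α'_j)|²`, then `α_j = α'_j`
for all `j`. -/
theorem stmt_19 (N : ℕ) (t : ℝ) (ht : 0 < t) (α α' : Fin N → ℂ)
    (hα : ∑ j, ‖α j‖ ^ 2 ≤ t)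
    (hα' : ∑ j, ‖α' j‖ ^ 2 ≤ t)
    (heq : (2 * t - ∑ j, ‖α j‖ ^ 2)
        * (2 * t - ∑ j, ‖α' j‖ ^ 2)
      = ‖(2 * t : ℂ) - ∑ j, α j * (starRingEnd ℂ) (α' j)‖ ^ 2) :
    ∀ j, α j = α' j := by
  classical
  set A := ∑ j, ‖α j‖ ^ 2 with hAdef
  set B := ∑ j, ‖α' j‖ ^ 2 with hBdef
  set S := ∑ j, α j * (starRingEnd ℂ) (α' j) with hSdef
  have hA0 : 0 ≤ A := Finset.sum_nonneg fun j _ => sq_nonneg _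
  have hB0 : 0 ≤ B := Finset.sum_nonneg fun j _ => sq_nonneg _
  set x : EuclideanSpace ℂ (Fin N) := WithLp.toLp 2 α with hxdef
  set y : EuclideanSpace ℂ (Fin N) := WithLp.toLp 2 α' with hydef
  have hnx : ‖x‖ = Real.sqrt A := by
    rw [EuclideanSpace.norm_eq]
  have hny : ‖y‖ = Real.sqrt B := by
    rw [EuclideanSpace.norm_eq]
  have hS : (inner ℂ y x : ℂ) = S := by
    rw [PiLp.inner_apply, hSdef]
    exact Finset.sum_congr rfl fun j _ => by
      simp [RCLike.inner_apply, mul_comm, hxdef, hydef]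
  set a := ‖S‖ with hadef
  have ha0 : 0 ≤ a := norm_nonneg _
  have hCSn : a ≤ Real.sqrt A * Real.sqrt B := by
    have h := norm_inner_le_norm (𝕜 := ℂ) y x
    rw [hS, hnx, hny] at h
    simpa [mul_comm] using h
  have hCS : a ^ 2 ≤ A * B := by
    have h := mul_self_le_mul_self ha0 hCSn
    calc a ^ 2 = a * a := sq a
      _ ≤ (Real.sqrt A * Real.sqrt B) * (Real.sqrt A * Real.sqrt B) := h
      _ = (Real.sqrt A * Real.sqrt A) * (Real.sqrt B * Real.sqrt B) := by ring
      _ = A * B := by rw [Real.mul_self_sqrt hA0, Real.mul_self_sqrt hB0]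
  have hra : S.re ≤ a := Complex.re_le_norm S
  have ha2 : a ^ 2 = S.re ^ 2 + S.im ^ 2 := by
    rw [hadef, Complex.sq_norm, Complex.normSq_apply]; ring
  have hrhs : ‖(2 * t : ℂ) - S‖ ^ 2 = (2 * t - S.re) ^ 2 + S.im ^ 2 := by
    rw [Complex.sq_norm, Complex.normSq_apply]
    simp [Complex.sub_re, Complex.sub_im]
    ring
  rw [hrhs] at heq
  obtain ⟨hrA, hi0, hABeq⟩ :=
    stmt_19_aux t A B S.re S.im a ht hA0 hB0 hα hα' ha0 hra hCS ha2 heq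
  have haA' : a = A := by
    have : a ^ 2 = A ^ 2 := by rw [ha2, hrA, hi0]; ring
    nlinarith
  have hSA : S = (A : ℂ) := by
    apply Complex.ext <;> simp [hrA, hi0]
  have hinner : (inner ℂ y x : ℂ) = (‖y‖ : ℂ) * (‖x‖ : ℂ) := by
    rw [hS, hSA, hnx, hny, ← hABeq]
    norm_cast
    rw [Real.mul_self_sqrt hA0]
  have hsmul : (‖x‖ : ℂ) • y = (‖y‖ : ℂ) • x := inner_eq_norm_mul_iff.mp hinner
  rcases eq_or_lt_of_le hA0 with hA | hApos
  · -- A = 0 : both vectors vanish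
    intro j
    have h1 : ‖α j‖ ^ 2 = 0 :=
      Finset.sum_eq_zero_iff_of_nonneg
        (fun j _ => sq_nonneg ‖α j‖) |>.mp hA.symm j (Finset.mem_univ j)
    have hB' : B = 0 := by rw [← hABeq, ← hA]
    have h2 : ‖α' j‖ ^ 2 = 0 :=
      Finset.sum_eq_zero_iff_of_nonneg
        (fun j _ => sq_nonneg ‖α' j‖) |>.mp hB' j (Finset.mem_univ j)
    have e1 : α j = 0 := by simpa using pow_eq_zero_iff two_ne_zero |>.mp h1
    have e2 : α' j = 0 := by simpa using pow_eq_zero_iff two_ne_zero |>.mp h2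
    exact e1.trans e2.symm
  · -- A > 0
    intro j
    have hsApos : 0 < Real.sqrt A := Real.sqrt_pos.mpr hApos
    have hxy : y = x := by
      have hne : (‖x‖ : ℂ) ≠ 0 := by
        rw [hnx]; exact_mod_cast ne_of_gt hsApos
      have h' : (‖x‖ : ℂ) • y = (‖x‖ : ℂ) • x := by
        rw [hsmul, hnx, hny, ← hABeq]
      exact smul_right_injective _ hne h'
    exact (congrArg (fun v : EuclideanSpace ℂ (Fin N) => v j) hxy).symm
end
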